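/- Let d > k ≥ 1 be integers, let Γ ⊆ G(d,k) be β-scaling for some β ≥ 0, and let E ⊆ ℝ^d be a compact (d,k,Γ)-set. Then for every α with 0 < α < 1 there exist a Borel probability measure μ on ℝ^d with support contained in E and a constant C > 0 such that |μ̂(ξ)| ≤ C‖ξ‖^{−αβ} for all ξ ∈ ℝ^d with ‖ξ‖ ≥ 1. (Consequently the Fourier dimension of E is at least min{2β, d}.) -/

import Mathlib

open MeasureTheory Metric Module
open scoped RealInnerProductSpace ENNReal

noncomputable section

/-- `ℝ^d`. -/
abbrev Ed (d : ℕ) : Type := EuclideanSpace ℝ (Fin d)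

/-- The Grassmannian `G(d,k)` of `k`-dimensional linear subspaces of `ℝ^d`. -/
def Gr (d k : ℕ) : Type := {s : Submodule ℝ (Ed d) // finrank ℝ s = k}

/-- The intersection of a subspace with the unit sphere. -/
def grSphere {d k : ℕ} (s : Gr d k) : Set (Ed d) :=
  (s.1 : Set (Ed d)) ∩ sphere (0 : Ed d) 1

lemma grSphere_isClosed {d k : ℕ} (s : Gr d k) : IsClosed (grSphere s) :=
  (Submodule.closed_of_finiteDimensional s.1).inter isClosed_sphere

lemma submodule_eq_of_sphere_eq {d : ℕ} {s t : Submodule ℝ (Ed d)}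
    (h : (s : Set (Ed d)) ∩ sphere (0 : Ed d) 1 = (t : Set (Ed d)) ∩ sphere (0 : Ed d) 1) :
    s = t := by
  have key : ∀ {s t : Submodule ℝ (Ed d)},
      (s : Set (Ed d)) ∩ sphere (0 : Ed d) 1 = (t : Set (Ed d)) ∩ sphere (0 : Ed d) 1 →
      s ≤ t := by
    intro s t h x hx
    rcases eq_or_ne x 0 with rfl | hx0
    · exact t.zero_mem
    · have hu : ‖x‖⁻¹ • x ∈ (s : Set (Ed d)) ∩ sphere (0 : Ed d) 1 := by
        refine ⟨s.smul_mem _ hx, ?_⟩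
        rw [mem_sphere_iff_norm, sub_zero, norm_smul, norm_inv, norm_norm,
          inv_mul_cancel₀ (norm_ne_zero_iff.2 hx0)]
      rw [h] at hu
      have := t.smul_mem ‖x‖ hu.1
      rwa [smul_smul, mul_inv_cancel₀ (norm_ne_zero_iff.2 hx0), one_smul] at this
  exact le_antisymm (key h) (key h.symm)

/-- The metric `d_{(d,k)}` on the Grassmannian: Hausdorff distance between the
intersections with the unit sphere. -/
instance GrEMetric (d k : ℕ) : EMetricSpace (Gr d k) where
  edist s t := Metric.hausdorffEDist (grSphere s) (grSphere t)
  edist_self s := EMetric.hausdorffEdist_self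
  edist_comm s t := EMetric.hausdorffEdist_comm
  edist_triangle s t u := EMetric.hausdorffEdist_triangle
  eq_of_edist_eq_zero := by
    intro s t h
    have heq := (EMetric.hausdorffEdist_zero_iff_eq_of_closed (grSphere_isClosed s)
      (grSphere_isClosed t)).1 h
    exact Subtype.ext (submodule_eq_of_sphere_eq heq)

lemma grSphere_nonempty {d k : ℕ} (hk : 1 ≤ k) (s : Gr d k) : (grSphere s).Nonempty := by
  have hbot : s.1 ≠ ⊥ := by
    intro hb
    have h2 := s.2
    rw [hb, finrank_bot] at h2
    omega
  obtain ⟨x, hxs, hx0⟩ := Submodule.ne_bot_iff _ |>.1 hbot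
  refine ⟨‖x‖⁻¹ • x, s.1.smul_mem _ hxs, ?_⟩
  rw [mem_sphere_iff_norm, sub_zero, norm_smul, norm_inv, norm_norm,
    inv_mul_cancel₀ (norm_ne_zero_iff.2 hx0)]

lemma grSphere_empty {d : ℕ} (s : Gr d 0) : grSphere s = ∅ := by
  have hb : s.1 = ⊥ := Submodule.finrank_eq_zero.1 s.2
  ext x
  simp [grSphere, hb, mem_sphere_iff_norm]

lemma gr_edist_ne_top {d k : ℕ} (s t : Gr d k) : edist s t ≠ ⊤ := by
  rcases Nat.eq_zero_or_pos k with rfl | hk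
  · show Metric.hausdorffEDist (grSphere s) (grSphere t) ≠ ⊤
    rw [grSphere_empty s, grSphere_empty t, EMetric.hausdorffEdist_self]
    exact ENNReal.zero_ne_top
  · exact Metric.hausdorffEdist_ne_top_of_nonempty_of_bounded
      (grSphere_nonempty hk s) (grSphere_nonempty hk t)
      ((isBounded_sphere (x := (0 : Ed d)) (r := 1)).subset Set.inter_subset_right)
      ((isBounded_sphere (x := (0 : Ed d)) (r := 1)).subset Set.inter_subset_right)

instance GrMetric (d k : ℕ) : MetricSpace (Gr d k) :=
  EMetricSpace.toMetricSpace gr_edist_ne_top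

instance (d k : ℕ) : MeasurableSpace (Gr d k) := borel _
instance (d k : ℕ) : BorelSpace (Gr d k) := ⟨rfl⟩

/-- The set `S_{ξ,η}` of subspaces nearly orthogonal to `ξ`. -/
def Sslab {d k : ℕ} (ξ : Ed d) (η : ℝ) : Set (Gr d k) :=
  {s | ‖(s.1.orthogonalProjectionOnto ξ : Ed d)‖ < η * ‖ξ‖}

/-- `Γ ⊆ G(d,k)` is `β`-scaling. -/
def BetaScaling {d k : ℕ} (Γ : Set (Gr d k)) (β : ℝ) : Prop :=
  ∃ γ : Measure (Gr d k), IsProbabilityMeasure γ ∧ γ Γᶜ = 0 ∧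
    ∃ C : ℝ, 0 < C ∧ ∀ ξ : Ed d, ξ ≠ 0 → ∀ η : ℝ, 0 < η →
      γ (Sslab ξ η) ≤ ENNReal.ofReal (C * η ^ β)

/-- `E` is a `(d,k,Γ)`-set. -/
def IsDKSet {d k : ℕ} (Γ : Set (Gr d k)) (E : Set (Ed d)) : Prop :=
  ∀ s ∈ Γ, ∃ (t : Ed d) (x : Fin k → Ed d), Orthonormal ℝ x ∧ (∀ i, x i ∈ s.1) ∧
    ∀ r : Fin k → ℝ, (∀ i, r i ∈ Set.Icc (0 : ℝ) 1) → t + ∑ i, r i • x i ∈ E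

/-- Fourier transform of a measure on `ℝ^d`. -/
def FT {d : ℕ} (μ : Measure (Ed d)) (ξ : Ed d) : ℂ :=
  ∫ x, Complex.exp (-2 * Real.pi * Complex.I * (⟪ξ, x⟫ : ℝ)) ∂μ

end

set_option linter.unusedSectionVars false
section Bump
open MeasureTheory Complex Real
open scoped FourierTransform
open scoped FourierTransform

noncomputable section

def bump : ContDiffBump (1/2 : ℝ) := ⟨1/4, 1/2, by norm_num, by norm_num⟩

def psiR : ℝ → ℝ := bump.normed volume

lemma psiR_nonneg (x : ℝ) : 0 ≤ psiR x := bump.nonneg_normed x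

lemma psiR_smooth : ContDiff ℝ ((⊤:ℕ∞) : WithTop ℕ∞) psiR := bump.contDiff_normed

lemma psiR_compSupp : HasCompactSupport psiR := bump.hasCompactSupport_normed

lemma psiR_integral : ∫ x, psiR x = 1 := bump.integral_normed

lemma psiR_supp : Function.support psiR ⊆ Set.Icc 0 1 := by
  rw [psiR, bump.support_normed_eq]
  intro x hx
  simp only [Metric.mem_ball, Real.dist_eq] at hx
  have : |x - 1/2| < 1/2 := by simpa [bump] using hx
  rw [abs_lt] at this
  constructor <;> [linarith; linarith]

def psiC : ℝ → ℂ := fun x => (psiR x : ℂ)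

lemma psiC_smooth : ContDiff ℝ ((⊤:ℕ∞) : WithTop ℕ∞) psiC :=
  Complex.ofRealCLM.contDiff.comp psiR_smooth

lemma psiC_compSupp : HasCompactSupport psiC := by
  apply psiR_compSupp.mono
  intro x hx
  simp only [psiC, Function.mem_support, ne_eq, Complex.ofReal_eq_zero] at hx ⊢
  exact hx

lemma psiC_iteratedDeriv_compSupp (n : ℕ) : HasCompactSupport (iteratedDeriv n psiC) := by
  induction n with
  | zero => simpa [iteratedDeriv_zero] using psiC_compSupp
  | succ n ih => rw [iteratedDeriv_succ]; exact ih.deriv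

lemma psiC_iteratedDeriv_integrable (n : ℕ) : Integrable (iteratedDeriv n psiC) := by
  refine Continuous.integrable_of_hasCompactSupport ?_ (psiC_iteratedDeriv_compSupp n)
  exact psiC_smooth.continuous_iteratedDeriv n (by exact_mod_cast le_top)

lemma psiC_integrable : Integrable psiC := by
  simpa [iteratedDeriv_zero] using psiC_iteratedDeriv_integrable 0

lemma psiC_FT_bound (w : ℝ) : ‖𝓕 psiC w‖ ≤ 1 := by
  refine (VectorFourier.norm_fourierIntegral_le_integral_norm _ _ _ _ _).trans ?_
  have h : ∀ x : ℝ, ‖psiC x‖ = psiR x := by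
    intro x
    rw [psiC, Complex.norm_real, Real.norm_eq_abs, _root_.abs_of_nonneg (psiR_nonneg x)]
  have : (∫ v, ‖psiC v‖) = ∫ v, psiR v := by simp only [h]
  rw [this, psiR_integral]

lemma psiC_FT_decay (N : ℕ) : ∃ C : ℝ, 0 < C ∧ ∀ w : ℝ, ‖𝓕 psiC w‖ * |w| ^ N ≤ C := by
  have key := Real.fourier_iteratedDeriv (N := (⊤ : ℕ∞)) psiC_smooth
    (fun n _ => psiC_iteratedDeriv_integrable n) (le_top (a := (N : ℕ∞)))
  refine ⟨(∫ v, ‖iteratedDeriv N psiC v‖) + 1, by positivity, fun w => ?_⟩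
  have h1 : ‖𝓕 (iteratedDeriv N psiC) w‖ ≤ ∫ v, ‖iteratedDeriv N psiC v‖ :=
    VectorFourier.norm_fourierIntegral_le_integral_norm _ _ _ _ _
  rw [key] at h1
  have h2 : ‖(2 * ↑π * I * ↑w) ^ N • 𝓕 psiC w‖ = (2 * π * |w|) ^ N * ‖𝓕 psiC w‖ := by
    rw [norm_smul, norm_pow]
    congr 2
    rw [show (2 * ↑π * I * ↑w : ℂ) = ((2 * π : ℝ) : ℂ) * I * (w : ℂ) by push_cast; ring]
    rw [norm_mul, norm_mul, Complex.norm_I, Complex.norm_real, Complex.norm_real,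
      Real.norm_eq_abs, Real.norm_eq_abs]
    rw [_root_.abs_of_nonneg (by positivity : (0:ℝ) ≤ 2 * π)]
    ring
  rw [h2] at h1
  have h3 : ‖𝓕 psiC w‖ * |w| ^ N ≤ (2 * π * |w|) ^ N * ‖𝓕 psiC w‖ := by
    rw [mul_pow (2*π) |w|]
    have hπ : (1:ℝ) ≤ (2*π)^N := one_le_pow₀ (by nlinarith [Real.pi_gt_three])
    nlinarith [norm_nonneg (𝓕 psiC w), pow_nonneg (abs_nonneg w) N,
      mul_nonneg (norm_nonneg (𝓕 psiC w)) (pow_nonneg (abs_nonneg w) N)]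
  calc ‖𝓕 psiC w‖ * |w| ^ N ≤ (2 * π * |w|) ^ N * ‖𝓕 psiC w‖ := h3
    _ ≤ ∫ v, ‖iteratedDeriv N psiC v‖ := h1
    _ ≤ _ := by linarith

end
lemma norm_exp_neg2pi (c : ℝ) : ‖Complex.exp (-2 * Real.pi * Complex.I * c)‖ = 1 := by
  rw [Complex.norm_exp]
  have h : (-2 * ↑Real.pi * Complex.I * (c:ℂ)).re = 0 := by
    simp [Complex.mul_re, Complex.mul_im]
  rw [h, Real.exp_zero]

lemma psiC_FT_eq (c : ℝ) :
    𝓕 psiC c = ∫ t : ℝ, (psiR t : ℂ) * Complex.exp (-2 * Real.pi * Complex.I * ((t * c : ℝ) : ℂ)) := by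
  rw [Real.fourier_real_eq_integral_exp_smul]
  refine integral_congr_ae (Filter.EventuallyEq.of_eq (funext fun t => ?_))
  rw [smul_eq_mul, mul_comm]
  congr 1
  push_cast
  ring
end Bump

section Sel
open MeasureTheory Metric Filter Topology

open MeasureTheory Metric Filter Topology

noncomputable section SelSection

variable {Z Y : Type*} [MetricSpace Z] [CompactSpace Z] [Nonempty Z]
  [MetricSpace Y]

/-- Recursive ball-selection indices for constructing a Borel section of `q`. -/
def selJ (q : Z → Y) (z : ℕ → Z) : ℕ → Y → ℕ
  | n, s => sInf {j | s ∈ q '' ((⋂ m ∈ Finset.range n,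
      closedBall (z (selJ q z m s)) ((1/2 : ℝ)^m)) ∩ closedBall (z j) ((1/2 : ℝ)^n))}
  decreasing_by exact Finset.mem_range.mp (by assumption)

/-- The nested compact constraint sets. -/
def selC (q : Z → Y) (z : ℕ → Z) (n : ℕ) (s : Y) : Set Z :=
  ⋂ m ∈ Finset.range n, closedBall (z (selJ q z m s)) ((1/2 : ℝ)^m)

lemma selJ_eq (q : Z → Y) (z : ℕ → Z) (n : ℕ) (s : Y) :
    selJ q z n s = sInf {j | s ∈ q '' (selC q z n s ∩ closedBall (z j) ((1/2 : ℝ)^n))} := by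
  rw [selJ]; rfl

lemma selC_zero (q : Z → Y) (z : ℕ → Z) (s : Y) : selC q z 0 s = Set.univ := by
  simp [selC]

lemma selC_succ (q : Z → Y) (z : ℕ → Z) (n : ℕ) (s : Y) :
    selC q z (n+1) s = selC q z n s ∩ closedBall (z (selJ q z n s)) ((1/2 : ℝ)^n) := by
  rw [selC, selC, Finset.range_add_one, Finset.set_biInter_insert, Set.inter_comm]

lemma selC_isClosed (q : Z → Y) (z : ℕ → Z) (n : ℕ) (s : Y) : IsClosed (selC q z n s) := by
  exact isClosed_biInter (fun m _ => isClosed_closedBall)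

/-- Invariant: the constraint sets keep meeting the fiber of `s`. -/
lemma sel_invariant (q : Z → Y) (z : ℕ → Z) (hz : DenseRange z) {s : Y}
    (hs : s ∈ Set.range q) : ∀ n, s ∈ q '' (selC q z n s) := by
  intro n
  induction n with
  | zero => rw [selC_zero, Set.image_univ]; exact hs
  | succ n ih =>
    obtain ⟨w, hwC, hwq⟩ := ih
    obtain ⟨j, hj⟩ := hz.exists_dist_lt w (by positivity : (0:ℝ) < (1/2)^n)
    have hne : {j | s ∈ q '' (selC q z n s ∩ closedBall (z j) ((1/2 : ℝ)^n))}.Nonempty := by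
      refine ⟨j, w, ⟨hwC, ?_⟩, hwq⟩
      rw [mem_closedBall, dist_comm] at *
      exact le_of_lt hj
    have hmem := Nat.sInf_mem hne
    rw [← selJ_eq] at hmem
    rwa [selC_succ]

lemma sel_nonempty (q : Z → Y) (z : ℕ → Z) (hz : DenseRange z) {s : Y}
    (hs : s ∈ Set.range q) (n : ℕ) : (selC q z n s).Nonempty := by
  obtain ⟨w, hw, -⟩ := sel_invariant q z hz hs n
  exact ⟨w, hw⟩

lemma sel_dist (q : Z → Y) (z : ℕ → Z) (hz : DenseRange z) {s : Y}
    (hs : s ∈ Set.range q) (n : ℕ) :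
    dist (z (selJ q z n s)) (z (selJ q z (n+1) s)) ≤ 2 * (1/2 : ℝ)^n := by
  obtain ⟨w, hw⟩ := sel_nonempty q z hz hs (n+2)
  have h1 : w ∈ closedBall (z (selJ q z (n+1) s)) ((1/2 : ℝ)^(n+1)) := by
    have := hw; rw [selC_succ] at this; exact this.2
  have h2 : w ∈ closedBall (z (selJ q z n s)) ((1/2 : ℝ)^n) := by
    have := hw; rw [selC_succ] at this
    have := this.1; rw [selC_succ] at this; exact this.2
  rw [mem_closedBall] at h1 h2
  calc dist (z (selJ q z n s)) (z (selJ q z (n+1) s))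
      ≤ dist (z (selJ q z n s)) w + dist w (z (selJ q z (n+1) s)) := dist_triangle _ _ _
    _ ≤ (1/2:ℝ)^n + (1/2:ℝ)^(n+1) := by
        rw [dist_comm (z (selJ q z n s)) w]; exact add_le_add h2 h1
    _ ≤ 2 * (1/2:ℝ)^n := by rw [pow_succ]; nlinarith [pow_nonneg (by norm_num : (0:ℝ) ≤ 1/2) n]

lemma sel_cauchy (q : Z → Y) (z : ℕ → Z) (hz : DenseRange z) {s : Y}
    (hs : s ∈ Set.range q) : CauchySeq (fun n => z (selJ q z n s)) :=
  cauchySeq_of_le_geometric (1/2) 2 (by norm_num) (sel_dist q z hz hs)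

/-- Any limit of the selected centers lies in the fiber over `s`. -/
lemma sel_fiber (q : Z → Y) (hq : Continuous q) (z : ℕ → Z) (hz : DenseRange z) {s : Y}
    (hs : s ∈ Set.range q) {w : Z}
    (hw : Tendsto (fun n => z (selJ q z n s)) atTop (nhds w)) : q w = s := by
  have hsel : ∀ n, ∃ wn, wn ∈ selC q z (n+1) s ∧ q wn = s := by
    intro n; obtain ⟨wn, h1, h2⟩ := sel_invariant q z hz hs (n+1); exact ⟨wn, h1, h2⟩
  choose wn hwn hqwn using hsel
  have hd : ∀ n, dist (wn n) (z (selJ q z n s)) ≤ (1/2:ℝ)^n := by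
    intro n
    have := hwn n; rw [selC_succ] at this
    exact mem_closedBall.mp this.2
  have hwn_tendsto : Tendsto wn atTop (nhds w) := by
    have h0 : Tendsto (fun n => ((1/2:ℝ)^n : ℝ)) atTop (nhds 0) :=
      tendsto_pow_atTop_nhds_zero_of_lt_one (by norm_num) (by norm_num)
    have : Tendsto (fun n => dist (wn n) w) atTop (nhds 0) := by
      have hb : ∀ n, dist (wn n) w ≤ (1/2:ℝ)^n + dist (z (selJ q z n s)) w := by
        intro n
        calc dist (wn n) w ≤ dist (wn n) (z (selJ q z n s)) + dist (z (selJ q z n s)) w :=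
              dist_triangle _ _ _
          _ ≤ (1/2:ℝ)^n + dist (z (selJ q z n s)) w := by
              exact add_le_add (hd n) le_rfl
      have hz0 : Tendsto (fun n => dist (z (selJ q z n s)) w) atTop (nhds 0) :=
        tendsto_iff_dist_tendsto_zero.mp hw
      have : Tendsto (fun n => (1/2:ℝ)^n + dist (z (selJ q z n s)) w) atTop (nhds 0) := by
        simpa using h0.add hz0
      exact squeeze_zero (fun n => dist_nonneg) hb this
    exact tendsto_iff_dist_tendsto_zero.mpr this
  have : Tendsto (fun n => q (wn n)) atTop (nhds (q w)) := (hq.tendsto w).comp hwn_tendsto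
  simp only [hqwn] at this
  exact (tendsto_const_nhds_iff.mp this).symm

/-- Auxiliary: measurability of `{s | sInf {j | s ∈ A j} = j₀}`. -/
lemma measurableSet_sInf_eq [MeasurableSpace Y] {A : ℕ → Set Y}
    (hA : ∀ j, MeasurableSet (A j)) (j₀ : ℕ) :
    MeasurableSet {s | sInf {j | s ∈ A j} = j₀} := by
  have : {s | sInf {j | s ∈ A j} = j₀} =
      (A j₀ ∩ ⋂ j, ⋂ (_ : j < j₀), (A j)ᶜ) ∪ ((⋂ j, (A j)ᶜ) ∩ {s | j₀ = 0}) := by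
    ext y
    simp only [Set.mem_setOf_eq, Set.mem_union, Set.mem_inter_iff, Set.mem_iInter,
      Set.mem_compl_iff]
    constructor
    · intro h
      by_cases hne : {j | y ∈ A j}.Nonempty
      · left
        refine ⟨by simpa using h ▸ Nat.sInf_mem hne, fun j hj hjA => ?_⟩
        exact Nat.notMem_of_lt_sInf (h ▸ hj) hjA
      · right
        rw [Set.not_nonempty_iff_eq_empty] at hne
        refine ⟨fun j hj => ?_, ?_⟩
        · have : j ∈ {j | y ∈ A j} := hj
          rw [hne] at this; exact this
        · rw [hne, Nat.sInf_empty] at h; exact h.symm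
    · rintro (⟨hj₀, hlt⟩ | ⟨hempty, hj0⟩)
      · refine le_antisymm (Nat.sInf_le hj₀) ?_
        by_contra hcon
        push_neg at hcon
        have hne : {j | y ∈ A j}.Nonempty := ⟨j₀, hj₀⟩
        exact hlt _ hcon (Nat.sInf_mem hne)
      · have : {j | y ∈ A j} = ∅ := by
          ext j; simp only [Set.mem_setOf_eq, Set.mem_empty_iff_false, iff_false]
          exact hempty j
        rw [this, Nat.sInf_empty]; exact hj0.symm
  rw [this]
  refine MeasurableSet.union (MeasurableSet.inter (hA j₀) ?_) (MeasurableSet.inter ?_ ?_)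
  · exact MeasurableSet.iInter fun j => MeasurableSet.iInter fun _ => (hA j).compl
  · exact MeasurableSet.iInter fun j => (hA j).compl
  · by_cases h : j₀ = 0
    · simp [h]
    · simp [h]

variable [MeasurableSpace Y] [BorelSpace Y]

lemma selJ_measurable (q : Z → Y) (hq : Continuous q) (z : ℕ → Z) (n : ℕ) :
    Measurable (selJ q z n) := by
  induction n using Nat.strong_induction_on with
  | _ n IH =>
    -- compact constraint sets for a fixed index vector
    set Cv : (Fin n → ℕ) → Set Z := fun v =>
      ⋂ m ∈ Finset.range n, closedBall (z (if h : m < n then v ⟨m, h⟩ else 0)) ((1/2  : ℝ)^m)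
      with hCv
    have hCv_eq : ∀ s, selC q z n s = Cv (fun m => selJ q z m.1 s) := by
      intro s
      refine Set.iInter₂_congr fun m hm => ?_
      rw [dif_pos (Finset.mem_range.mp hm)]
    have hAclosed : ∀ (v : Fin n → ℕ) (j : ℕ),
        MeasurableSet (q '' (Cv v ∩ closedBall (z j) ((1/2 : ℝ)^n))) := by
      intro v j
      have hC : IsClosed (Cv v ∩ closedBall (z j) ((1/2 : ℝ)^n)) :=
        (isClosed_biInter fun m _ => isClosed_closedBall).inter isClosed_closedBall
      exact ((hC.isCompact.image hq).isClosed).measurableSet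
    apply measurable_to_countable'
    intro j₀
    have hdecomp : selJ q z n ⁻¹' {j₀} = ⋃ (v : Fin n → ℕ),
        ((⋂ m : Fin n, (selJ q z m.1) ⁻¹' {v m}) ∩
          {s | sInf {j | s ∈ q '' (Cv v ∩ closedBall (z j) ((1/2 : ℝ)^n))} = j₀}) := by
      ext s
      simp only [Set.mem_preimage, Set.mem_singleton_iff, Set.mem_iUnion, Set.mem_inter_iff,
        Set.mem_iInter, Set.mem_setOf_eq]
      constructor
      · intro h
        refine ⟨fun m => selJ q z m.1 s, fun m => rfl, ?_⟩
        rw [← hCv_eq s, ← selJ_eq]; exact h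
      · rintro ⟨v, hv, hs⟩
        have hvv : (fun m : Fin n => selJ q z m.1 s) = v := funext hv
        rw [← hvv, ← hCv_eq s] at hs
        rw [selJ_eq]; exact hs
    rw [hdecomp]
    refine MeasurableSet.iUnion fun v => MeasurableSet.inter ?_ ?_
    · exact MeasurableSet.iInter fun m =>
        (IH m.1 m.2) (MeasurableSet.singleton (v m))
    · exact measurableSet_sInf_eq (fun j => hAclosed v j) j₀

/-- **Borel selection along a continuous map from a compact metric space.**
There is a measurable map `g` with `q ∘ g = id` almost everywhere. -/
theorem exists_measurable_section [SecondCountableTopology Z] [MeasurableSpace Z] [BorelSpace Z]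
    (q : Z → Y) (hq : Continuous q) (μ : Measure Y) (hμ : μ (Set.range q)ᶜ = 0) :
    ∃ g : Y → Z, Measurable g ∧ (∀ s, q (g s) ∈ Set.range q) ∧ ∀ᵐ s ∂μ, q (g s) = s := by
  have hz : DenseRange (TopologicalSpace.denseSeq Z) := TopologicalSpace.denseRange_denseSeq Z
  set z := TopologicalSpace.denseSeq Z
  have hrange : ∀ᵐ s ∂μ, s ∈ Set.range q := by
    have heq : {s | ¬ s ∈ Set.range q} = (Set.range q)ᶜ := rfl
    rw [MeasureTheory.ae_iff, heq]; exact hμ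
  have hconv : ∀ᵐ s ∂μ, ∃ w : Z, Tendsto (fun n => z (selJ q z n s)) atTop (nhds w) := by
    filter_upwards [hrange] with s hs
    exact cauchySeq_tendsto_of_complete (sel_cauchy q z hz hs)
  obtain ⟨g, hgmeas, hgtendsto⟩ := measurable_limit_of_tendsto_metrizable_ae
    (f := fun n s => z (selJ q z n s)) (L := atTop)
    (fun n => ((measurable_from_top).comp (selJ_measurable q hq z n)).aemeasurable) hconv
  refine ⟨g, hgmeas, fun s => ⟨g s, rfl⟩, ?_⟩
  filter_upwards [hrange, hgtendsto] with s hs htend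
  exact sel_fiber q hq z hz hs htend

end SelSection
end Sel

-- ============ Part 3 : geometry ============
noncomputable section

open MeasureTheory Metric Module Filter Topology Submodule
open scoped RealInnerProductSpace

namespace DK

variable {d k : ℕ}

lemma proj_formula (x : Fin k → Ed d) (hx : Orthonormal ℝ x) (ξ : Ed d) :
    ((span ℝ (Set.range x)).orthogonalProjectionOnto ξ : Ed d) = ∑ i, ⟪ξ, x i⟫ • x i := by
  classical
  apply eq_starProjection_of_mem_of_inner_eq_zero
  · exact Submodule.sum_mem _ fun i _ => Submodule.smul_mem _ _ (subset_span ⟨i, rfl⟩)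
  · intro w hw
    have key : ∀ j, ⟪ξ - ∑ i, ⟪ξ, x i⟫ • x i, x j⟫ = 0 := by
      intro j
      rw [inner_sub_left, sum_inner]
      have : ∀ i, ⟪(⟪ξ, x i⟫ : ℝ) • x i, x j⟫ = ⟪ξ, x i⟫ * (if i = j then (1:ℝ) else 0) := by
        intro i
        rw [real_inner_smul_left, orthonormal_iff_ite.mp hx i j]
      simp only [this, mul_ite, mul_one, mul_zero, Finset.sum_ite_eq', Finset.mem_univ, if_true]
      ring
    induction hw using Submodule.span_induction with
    | mem w hw => obtain ⟨j, rfl⟩ := hw; exact key j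
    | zero => exact inner_zero_right _
    | add u v hu hv hu' hv' => rw [inner_add_right, hu', hv', add_zero]
    | smul c u hu hu' => rw [real_inner_smul_right, hu', mul_zero]

lemma norm_sq_sum_smul (x : Fin k → Ed d) (hx : Orthonormal ℝ x) (c : Fin k → ℝ) :
    ‖∑ i, c i • x i‖^2 = ∑ i, (c i)^2 := by
  classical
  rw [← real_inner_self_eq_norm_sq, sum_inner]
  have : ∀ i, ⟪c i • x i, ∑ j, c j • x j⟫ = (c i)^2 := by
    intro i
    rw [real_inner_smul_left, inner_sum]
    have : ∀ j, ⟪x i, c j • x j⟫ = c j * (if i = j then (1:ℝ) else 0) := by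
      intro j
      rw [real_inner_smul_right, orthonormal_iff_ite.mp hx i j]
    simp only [this, mul_ite, mul_one, mul_zero, Finset.sum_ite_eq, Finset.sum_ite_eq',
      Finset.mem_univ, if_true]
    ring
  simp only [this]

lemma span_finrank (x : Fin k → Ed d) (hx : Orthonormal ℝ x) :
    finrank ℝ (span ℝ (Set.range x)) = k := by
  rw [finrank_span_eq_card hx.linearIndependent, Fintype.card_fin]

/-- The compact set of "good cubes". -/
def Wgood (E : Set (Ed d)) : Set (Ed d × (Fin k → Ed d)) :=
  {w | Orthonormal ℝ w.2 ∧ ∀ r : Fin k → ℝ, (∀ i, r i ∈ Set.Icc (0:ℝ) 1) →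
    w.1 + ∑ i, r i • w.2 i ∈ E}

lemma Wgood_isClosed {E : Set (Ed d)} (hE : IsClosed E) : IsClosed (Wgood (k := k) E) := by
  have h1 : IsClosed {w : Ed d × (Fin k → Ed d) | Orthonormal ℝ w.2} := by
    classical
    have : {w : Ed d × (Fin k → Ed d) | Orthonormal ℝ w.2} =
        ⋂ (i : Fin k), ⋂ (j : Fin k),
          {w | ⟪w.2 i, w.2 j⟫ = (if i = j then (1:ℝ) else 0)} := by
      ext w
      simp only [Set.mem_setOf_eq, Set.mem_iInter, orthonormal_iff_ite]
    rw [this]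
    refine isClosed_iInter fun i => isClosed_iInter fun j => isClosed_eq ?_ continuous_const
    exact Continuous.inner ((continuous_apply i).comp continuous_snd)
      ((continuous_apply j).comp continuous_snd)
  have h2 : IsClosed {w : Ed d × (Fin k → Ed d) | ∀ r : Fin k → ℝ,
      (∀ i, r i ∈ Set.Icc (0:ℝ) 1) → w.1 + ∑ i, r i • w.2 i ∈ E} := by
    have : {w : Ed d × (Fin k → Ed d) | ∀ r : Fin k → ℝ,
        (∀ i, r i ∈ Set.Icc (0:ℝ) 1) → w.1 + ∑ i, r i • w.2 i ∈ E} =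
        ⋂ (r : Fin k → ℝ), ⋂ (_ : ∀ i, r i ∈ Set.Icc (0:ℝ) 1),
          (fun w : Ed d × (Fin k → Ed d) => w.1 + ∑ i, r i • w.2 i) ⁻¹' E := by
      ext w; simp only [Set.mem_setOf_eq, Set.mem_iInter, Set.mem_preimage]
    rw [this]
    refine isClosed_iInter fun r => isClosed_iInter fun _ => IsClosed.preimage ?_ hE
    refine continuous_fst.add ?_
    exact continuous_finset_sum _ fun i _ =>
      ((continuous_apply i).comp continuous_snd).const_smul (r i)
  exact (h1.inter h2 : _)

lemma Wgood_isCompact {E : Set (Ed d)} (hEc : IsCompact E) : IsCompact (Wgood (k := k) E) := by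
  refine Metric.isCompact_of_isClosed_isBounded (Wgood_isClosed hEc.isClosed) ?_
  have hsub : Wgood (k := k) E ⊆ E ×ˢ (Metric.closedBall (0 : Fin k → Ed d) 1) := by
    rintro ⟨t, x⟩ ⟨hx, hcube⟩
    constructor
    · have := hcube (fun _ => 0) (fun i => by simp [Set.mem_Icc])
      simpa using this
    · simp only [Set.mem_setOf_eq, mem_closedBall, dist_zero_right]
      rw [pi_norm_le_iff_of_nonneg zero_le_one]
      intro i
      simp [hx.1 i]
  exact (hEc.isBounded.prod isBounded_closedBall).subset hsub

/-- The map from a good cube to its subspace in the Grassmannian. -/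
def qmap {E : Set (Ed d)} (w : ↥(Wgood (k := k) E)) : Gr d k :=
  ⟨span ℝ (Set.range w.1.2), span_finrank _ w.2.1⟩

lemma sum_abs_le_sqrt (c : Fin k → ℝ) (h : ∑ i, (c i)^2 = 1) :
    ∑ i, |c i| ≤ Real.sqrt k := by
  have h1 : (∑ i, |c i|)^2 ≤ (k : ℝ) * ∑ i, |c i|^2 := by
    have := sq_sum_le_card_mul_sum_sq (s := (Finset.univ : Finset (Fin k))) (f := fun i => |c i|)
    simpa using this
  have h2 : ∑ i, |c i|^2 = 1 := by simpa [sq_abs] using h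
  rw [h2, mul_one] at h1
  have := Real.sqrt_le_sqrt h1
  rwa [Real.sqrt_sq (Finset.sum_nonneg fun i _ => abs_nonneg _)] at this
lemma exists_coords {x : Fin k → Ed d} (hx : Orthonormal ℝ x) {u : Ed d}
    (hu : u ∈ span ℝ (Set.range x)) : u = ∑ i, ⟪u, x i⟫ • x i :=
  (starProjection_eq_self_iff.mpr hu).symm.trans (proj_formula x hx u)

lemma mem_grSphere_iff {s : Gr d k} {u : Ed d} :
    u ∈ grSphere s ↔ u ∈ s.1 ∧ ‖u‖ = 1 := by
  simp [grSphere, mem_sphere_iff_norm]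

lemma grSphere_approx {x y : Fin k → Ed d} (hx : Orthonormal ℝ x) (hy : Orthonormal ℝ y)
    {δ : ℝ} (hδ0 : 0 ≤ δ) (hδ : Real.sqrt k * δ ≤ 1/2) (h : ∀ i, ‖x i - y i‖ ≤ δ)
    {u : Ed d} (hu : u ∈ grSphere ⟨span ℝ (Set.range x), span_finrank x hx⟩) :
    ∃ v ∈ grSphere ⟨span ℝ (Set.range y), span_finrank y hy⟩,
      dist u v ≤ 2 * (Real.sqrt k * δ) := by
  replace hu := mem_grSphere_iff.mp hu
  obtain ⟨huspan, hunorm⟩ := hu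
  set c : Fin k → ℝ := fun i => ⟪u, x i⟫ with hc
  have hu_eq : u = ∑ i, c i • x i := exists_coords hx huspan
  have hc2 : ∑ i, (c i)^2 = 1 := by
    have h1 := norm_sq_sum_smul x hx c
    rw [← hu_eq, hunorm] at h1
    simpa using h1.symm
  set v0 : Ed d := ∑ i, c i • y i with hv0
  have hsumabs : ∑ i, |c i| ≤ Real.sqrt k := sum_abs_le_sqrt c hc2
  have hdiff : ‖u - v0‖ ≤ Real.sqrt k * δ := by
    have he : u - v0 = ∑ i, c i • (x i - y i) := by
      rw [hu_eq, hv0, ← Finset.sum_sub_distrib]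
      congr 1; ext i; rw [smul_sub]
    rw [he]
    calc ‖∑ i, c i • (x i - y i)‖ ≤ ∑ i, ‖c i • (x i - y i)‖ := norm_sum_le _ _
      _ ≤ ∑ i, |c i| * δ := by
          refine Finset.sum_le_sum fun i _ => ?_
          rw [norm_smul, Real.norm_eq_abs]
          exact mul_le_mul_of_nonneg_left (h i) (abs_nonneg _)
      _ = (∑ i, |c i|) * δ := by rw [Finset.sum_mul]
      _ ≤ Real.sqrt k * δ := mul_le_mul_of_nonneg_right hsumabs hδ0
  have hv0_norm : 1 - Real.sqrt k * δ ≤ ‖v0‖ := by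
    have := norm_sub_norm_le u v0
    have h2 : ‖u‖ - ‖v0‖ ≤ Real.sqrt k * δ := le_trans this hdiff
    rw [hunorm] at h2; linarith
  have hv0_pos : (0:ℝ) < ‖v0‖ := by linarith
  have hv0_ne : v0 ≠ 0 := norm_pos_iff.mp hv0_pos
  refine ⟨‖v0‖⁻¹ • v0, ?_, ?_⟩
  · refine mem_grSphere_iff.mpr ?_
    constructor
    · exact Submodule.smul_mem _ _ (Submodule.sum_mem _ fun i _ =>
        Submodule.smul_mem _ _ (subset_span ⟨i, rfl⟩))
    · rw [norm_smul, norm_inv, norm_norm, inv_mul_cancel₀ (ne_of_gt hv0_pos)]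
  · have hvv : ‖v0 - ‖v0‖⁻¹ • v0‖ = |‖v0‖ - 1| := by
      have h0 : v0 - ‖v0‖⁻¹ • v0 = (1 - ‖v0‖⁻¹) • v0 := by
        rw [sub_smul, one_smul]
      rw [h0, norm_smul, Real.norm_eq_abs]
      nth_rewrite 2 [show ‖v0‖ = |‖v0‖| from (abs_of_pos hv0_pos).symm]
      rw [← abs_mul, sub_mul, one_mul, inv_mul_cancel₀ (ne_of_gt hv0_pos)]
    have habs : |‖v0‖ - 1| ≤ Real.sqrt k * δ := by
      rw [← hunorm, abs_sub_comm]
      exact le_trans (abs_norm_sub_norm_le u v0) hdiff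
    rw [dist_eq_norm]
    calc ‖u - ‖v0‖⁻¹ • v0‖ ≤ ‖u - v0‖ + ‖v0 - ‖v0‖⁻¹ • v0‖ := by
          have := norm_sub_le_norm_sub_add_norm_sub u v0 (‖v0‖⁻¹ • v0)
          exact this
      _ ≤ Real.sqrt k * δ + Real.sqrt k * δ := add_le_add hdiff (hvv ▸ habs)
      _ = 2 * (Real.sqrt k * δ) := by ring

lemma qmap_edist {E : Set (Ed d)} (w w' : ↥(Wgood (k := k) E))
    (hδ : Real.sqrt k * dist w w' ≤ 1/2) :
    edist (qmap w) (qmap w') ≤ ENNReal.ofReal (2 * (Real.sqrt k * dist w w')) := by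
  have hcoord : ∀ (a b : ↥(Wgood (k := k) E)) (i : Fin k),
      ‖(a.1.2 : Fin k → Ed d) i - b.1.2 i‖ ≤ dist a b := by
    intro a b i
    rw [← dist_eq_norm]
    calc dist (a.1.2 i) (b.1.2 i) ≤ dist a.1.2 b.1.2 := dist_le_pi_dist _ _ i
      _ ≤ dist a.1 b.1 := by rw [Prod.dist_eq]; exact le_max_right _ _
      _ = dist a b := rfl
  have key : EMetric.hausdorffEdist (grSphere (qmap w)) (grSphere (qmap w'))
      ≤ ENNReal.ofReal (2 * (Real.sqrt k * dist w w')) := by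
    refine EMetric.hausdorffEdist_le_of_mem_edist ?_ ?_
    · intro u hu
      obtain ⟨v, hv, hd⟩ := grSphere_approx w.2.1 w'.2.1 dist_nonneg hδ
        (hcoord w w') hu
      exact ⟨v, hv, by rw [edist_dist]; exact ENNReal.ofReal_le_ofReal hd⟩
    · intro u hu
      have hδ' : Real.sqrt k * dist w' w ≤ 1/2 := by rwa [dist_comm]
      obtain ⟨v, hv, hd⟩ := grSphere_approx w'.2.1 w.2.1 dist_nonneg hδ'
        (hcoord w' w) hu
      refine ⟨v, hv, ?_⟩
      rw [edist_dist]
      refine ENNReal.ofReal_le_ofReal (le_trans hd ?_)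
      rw [dist_comm]
  exact key

lemma qmap_continuous {E : Set (Ed d)} : Continuous (qmap : ↥(Wgood (k := k) E) → Gr d k) := by
  rw [Metric.continuous_iff]
  intro w ε hε
  set K := Real.sqrt k with hK
  have hK0 : 0 ≤ K := Real.sqrt_nonneg _
  refine ⟨min (ε / (2 * K + 1)) (1 / (2 * K + 1)), ?_, ?_⟩
  · have : (0:ℝ) < 2 * K + 1 := by linarith
    exact lt_min (by positivity) (by positivity)
  · intro w' hw'
    have h1 : dist w' w < ε / (2 * K + 1) := lt_of_lt_of_le hw' (min_le_left _ _)
    have h2 : dist w' w < 1 / (2 * K + 1) := lt_of_lt_of_le hw' (min_le_right _ _)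
    have hpos : (0:ℝ) < 2 * K + 1 := by linarith
    have hδ : K * dist w' w ≤ 1/2 := by
      have : K * dist w' w ≤ K * (1 / (2 * K + 1)) :=
        mul_le_mul_of_nonneg_left h2.le hK0
      calc K * dist w' w ≤ K / (2 * K + 1) := by rwa [mul_one_div] at this
        _ ≤ 1/2 := by
          rw [div_le_iff₀ hpos]; nlinarith
    have hedist := qmap_edist w' w hδ
    have hdist : dist (qmap w') (qmap w) ≤ 2 * (K * dist w' w) := by
      rw [dist_edist]
      have := ENNReal.toReal_mono ENNReal.ofReal_ne_top hedist
      rwa [ENNReal.toReal_ofReal (by positivity)] at this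
    calc dist (qmap w') (qmap w) ≤ 2 * (K * dist w' w) := hdist
      _ ≤ 2 * (K * (ε / (2 * K + 1))) := by
        refine mul_le_mul_of_nonneg_left ?_ (by norm_num)
        exact mul_le_mul_of_nonneg_left h1.le hK0
      _ < ε := by
        rw [show 2 * (K * (ε / (2 * K + 1))) = 2 * K * ε / (2 * K + 1) by ring]
        rw [div_lt_iff₀ hpos]; nlinarith
end DK
end

-- ============ Part 4 : measure assembly ============
noncomputable section

namespace DK

open MeasureTheory Metric Module Filter Topology Submodule Complex
open scoped RealInnerProductSpace FourierTransform ENNReal NNReal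

variable {d k : ℕ}

/-- The cube map. -/
def Phi : (Ed d × (Fin k → Ed d)) × (Fin k → ℝ) → Ed d :=
  fun p => p.1.1 + ∑ i, p.2 i • p.1.2 i

lemma Phi_continuous : Continuous (Phi (d := d) (k := k)) := by
  refine (continuous_fst.fst.add ?_)
  exact continuous_finset_sum _ fun i _ =>
    ((continuous_apply i).comp continuous_snd).smul
      ((continuous_apply i).comp (continuous_fst.snd))

/-- The smooth probability measure on the parameter cube. -/
def nuD (k : ℕ) : Measure (Fin k → ℝ) :=
  volume.withDensity fun r => ENNReal.ofReal (∏ i, psiR (r i))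

lemma prodPsi_continuous : Continuous (fun r : Fin k → ℝ => ∏ i, psiR (r i)) :=
  continuous_finset_prod _ fun i _ =>
    (psiR_smooth.continuous).comp (continuous_apply i)

lemma prodPsi_zero {r : Fin k → ℝ} (hr : ¬ ∀ i, r i ∈ Set.Icc (0:ℝ) 1) :
    ∏ i, psiR (r i) = 0 := by
  push_neg at hr
  obtain ⟨i, hi⟩ := hr
  refine Finset.prod_eq_zero (Finset.mem_univ i) ?_
  by_contra h0
  exact hi (psiR_supp (Function.mem_support.mpr h0))

lemma prodPsi_integrable : Integrable (fun r : Fin k → ℝ => ∏ i, psiR (r i)) := by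
  refine prodPsi_continuous.integrable_of_hasCompactSupport ?_
  refine HasCompactSupport.intro (K := Set.pi Set.univ fun _ : Fin k => Set.Icc (0:ℝ) 1)
    (isCompact_univ_pi fun _ => isCompact_Icc) ?_
  intro r hr
  refine prodPsi_zero fun h => hr fun i _ => h i

lemma nuD_prob : IsProbabilityMeasure (nuD k) := by
  constructor
  rw [nuD, withDensity_apply _ MeasurableSet.univ, Measure.restrict_univ,
    ← ofReal_integral_eq_lintegral_ofReal prodPsi_integrable
      (Filter.Eventually.of_forall fun r => Finset.prod_nonneg fun i _ => psiR_nonneg _)]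
  rw [MeasureTheory.volume_pi, MeasureTheory.integral_fintype_prod_eq_prod (f := fun _ t => psiR t)]
  simp [psiR_integral]

lemma nuD_outside : nuD k {r | ¬ ∀ i, r i ∈ Set.Icc (0:ℝ) 1} = 0 := by
  have hmeas : MeasurableSet {r : Fin k → ℝ | ¬ ∀ i, r i ∈ Set.Icc (0:ℝ) 1} := by
    have : {r : Fin k → ℝ | ¬ ∀ i, r i ∈ Set.Icc (0:ℝ) 1}
        = (Set.pi Set.univ fun _ => Set.Icc (0:ℝ) 1)ᶜ := by
      ext r
      simp only [Set.mem_setOf_eq, Set.mem_compl_iff, Set.mem_pi, Set.mem_univ, true_implies]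
    rw [this]
    exact (MeasurableSet.univ_pi fun _ => measurableSet_Icc).compl
  rw [nuD, withDensity_apply _ hmeas]
  rw [setLIntegral_congr_fun hmeas
    (fun r hr => by rw [prodPsi_zero hr, ENNReal.ofReal_zero])]
  simp

lemma prodPsi_nnmeas : Measurable (fun r : Fin k → ℝ => Real.toNNReal (∏ i, psiR (r i))) :=
  measurable_real_toNNReal.comp prodPsi_continuous.measurable

/-- Factorization of the Fourier transform of the cube-average measure. -/
lemma FT_factor (P : Measure (Ed d × (Fin k → Ed d))) [IsProbabilityMeasure P] (ξ : Ed d) :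
    FT (Measure.map Phi (P.prod (nuD k))) ξ
      = ∫ w, Complex.exp (-2 * Real.pi * Complex.I * ((⟪ξ, w.1⟫ : ℝ) : ℂ))
          * ∏ i, 𝓕 psiC ⟪ξ, w.2 i⟫ ∂P := by
  haveI : IsProbabilityMeasure (nuD k) := nuD_prob
  have hcont : Continuous fun y : Ed d =>
      Complex.exp (-2 * Real.pi * Complex.I * ((⟪ξ, y⟫ : ℝ) : ℂ)) := by
    refine Complex.continuous_exp.comp (continuous_const.mul ?_)
    exact Complex.continuous_ofReal.comp (continuous_const.inner continuous_id)
  rw [FT, integral_map Phi_continuous.aemeasurable hcont.aestronglyMeasurable]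
  rw [integral_prod]
  swap
  · refine Integrable.mono' (integrable_const (1:ℝ))
      ((hcont.comp Phi_continuous).aestronglyMeasurable) ?_
    exact Filter.Eventually.of_forall fun p => le_of_eq (norm_exp_neg2pi _)
  refine integral_congr_ae (Filter.Eventually.of_forall fun w => ?_)
  have hsplit : ∀ r : Fin k → ℝ,
      Complex.exp (-2 * Real.pi * Complex.I * ((⟪ξ, Phi (w, r)⟫ : ℝ) : ℂ))
      = Complex.exp (-2 * Real.pi * Complex.I * ((⟪ξ, w.1⟫ : ℝ) : ℂ))
        * ∏ i, Complex.exp (-2 * Real.pi * Complex.I * ((r i * ⟪ξ, w.2 i⟫ : ℝ) : ℂ)) := by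
    intro r
    have hinner : (⟪ξ, Phi (w, r)⟫ : ℝ) = ⟪ξ, w.1⟫ + ∑ i, r i * ⟪ξ, w.2 i⟫ := by
      rw [Phi]
      rw [inner_add_right, inner_sum]
      simp_rw [real_inner_smul_right]
    rw [hinner]
    push_cast
    rw [mul_add, Complex.exp_add]
    congr 1
    rw [Finset.mul_sum, Complex.exp_sum]
  simp_rw [hsplit]
  rw [integral_const_mul]
  congr 1
  have hdens : (fun r : Fin k → ℝ => ENNReal.ofReal (∏ i, psiR (r i)))
      = fun r => ((Real.toNNReal (∏ i, psiR (r i)) : ℝ≥0) : ℝ≥0∞) := rfl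
  rw [nuD, hdens, integral_withDensity_eq_integral_smul prodPsi_nnmeas]
  have hch : ∀ r : Fin k → ℝ,
      (Real.toNNReal (∏ i, psiR (r i))) •
        (∏ i, Complex.exp (-2 * Real.pi * Complex.I * ((r i * ⟪ξ, w.2 i⟫ : ℝ) : ℂ)))
      = ∏ i, ((psiR (r i) : ℂ)
          * Complex.exp (-2 * Real.pi * Complex.I * ((r i * ⟪ξ, w.2 i⟫ : ℝ) : ℂ))) := by
    intro r
    rw [Finset.prod_mul_distrib, NNReal.smul_def,
      Real.coe_toNNReal _ (Finset.prod_nonneg fun i _ => psiR_nonneg _)]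
    rw [Complex.real_smul]
    push_cast
    ring
  simp_rw [hch]
  rw [MeasureTheory.volume_pi, MeasureTheory.integral_fintype_prod_eq_prod
    (f := fun i t => (psiR t : ℂ)
      * Complex.exp (-2 * Real.pi * Complex.I * ((t * ⟪ξ, w.2 i⟫ : ℝ) : ℂ)))]
  exact Finset.prod_congr rfl fun i _ => (psiC_FT_eq ⟪ξ, w.2 i⟫).symm

/-- Pointwise bound for the norm of the integrand in `FT_factor`. -/
lemma FT_factor_norm (ξ : Ed d) (w : Ed d × (Fin k → Ed d)) :
    ‖Complex.exp (-2 * Real.pi * Complex.I * ((⟪ξ, w.1⟫ : ℝ) : ℂ))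
      * ∏ i, 𝓕 psiC ⟪ξ, w.2 i⟫‖ = ∏ i, ‖𝓕 psiC ⟪ξ, w.2 i⟫‖ := by
  rw [norm_mul, norm_exp_neg2pi, one_mul]
  exact norm_prod _ _

/-- Off-slab decay bound for the product. -/
lemma offslab_bound (hk : 1 ≤ k) (ξ : Ed d) (N : ℕ) (CN : ℝ) (hCN : 0 < CN)
    (hdecay : ∀ u : ℝ, ‖𝓕 psiC u‖ * |u| ^ N ≤ CN) (hbound : ∀ u : ℝ, ‖𝓕 psiC u‖ ≤ 1)
    {m : ℝ} (hm : 0 < m) (w : Ed d × (Fin k → Ed d))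
    (hw : m ^ 2 * k ≤ ∑ i, (⟪ξ, w.2 i⟫ : ℝ) ^ 2) :
    ∏ i, ‖𝓕 psiC ⟪ξ, w.2 i⟫‖ ≤ CN / m ^ N := by
  haveI : Nonempty (Fin k) := ⟨⟨0, hk⟩⟩
  obtain ⟨i₀, hi₀⟩ : ∃ i₀ : Fin k, m ^ 2 ≤ (⟪ξ, w.2 i₀⟫ : ℝ) ^ 2 := by
    by_contra hcon
    push_neg at hcon
    have : ∑ i, (⟪ξ, w.2 i⟫ : ℝ) ^ 2 < ∑ _i : Fin k, m ^ 2 :=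
      Finset.sum_lt_sum_of_nonempty Finset.univ_nonempty fun i _ => hcon i
    rw [Finset.sum_const, Finset.card_univ, Fintype.card_fin, nsmul_eq_mul] at this
    nlinarith
  have habs : m ≤ |⟪ξ, w.2 i₀⟫| := by
    have h1 : m ^ 2 ≤ |(⟪ξ, w.2 i₀⟫ : ℝ)| ^ 2 := by rwa [_root_.sq_abs]
    exact le_of_pow_le_pow_left₀ (by norm_num) (abs_nonneg _) h1
  have hc_pos : 0 < |(⟪ξ, w.2 i₀⟫ : ℝ)| := lt_of_lt_of_le hm habs
  have hsingle : ‖𝓕 psiC ⟪ξ, w.2 i₀⟫‖ ≤ CN / m ^ N := by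
    have h1 : ‖𝓕 psiC ⟪ξ, w.2 i₀⟫‖ * m ^ N ≤ CN := by
      refine le_trans ?_ (hdecay ⟪ξ, w.2 i₀⟫)
      exact mul_le_mul_of_nonneg_left (pow_le_pow_left₀ hm.le habs N) (norm_nonneg _)
    rw [le_div_iff₀ (by positivity)]
    exact h1
  calc ∏ i, ‖𝓕 psiC ⟪ξ, w.2 i⟫‖
      = ‖𝓕 psiC ⟪ξ, w.2 i₀⟫‖ * ∏ i ∈ Finset.univ.erase i₀, ‖𝓕 psiC ⟪ξ, w.2 i⟫‖ :=
        (Finset.mul_prod_erase _ _ (Finset.mem_univ i₀)).symm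
    _ ≤ ‖𝓕 psiC ⟪ξ, w.2 i₀⟫‖ * 1 := by
        refine mul_le_mul_of_nonneg_left ?_ (norm_nonneg _)
        exact Finset.prod_le_one (fun i _ => norm_nonneg _) (fun i _ => hbound _)
    _ ≤ CN / m ^ N := by rw [mul_one]; exact hsingle

end DK
end

open MeasureTheory Metric Module Filter Topology Submodule
open scoped RealInnerProductSpace ENNReal FourierTransform NNReal

/-- Fourier decay for compact `(d,k,Γ)`-sets with `β`-scaling `Γ`. -/
theorem stmt0 (d k : ℕ) (hk : 1 ≤ k) (hkd : k < d) (β : ℝ) (hβ : 0 ≤ β)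
    (Γ : Set (Gr d k)) (hΓ : BetaScaling Γ β)
    (E : Set (Ed d)) (hEc : IsCompact E) (hE : IsDKSet Γ E) :
    ∀ α : ℝ, 0 < α → α < 1 →
      ∃ μ : Measure (Ed d), IsProbabilityMeasure μ ∧ μ Eᶜ = 0 ∧
        ∃ C : ℝ, 0 < C ∧ ∀ ξ : Ed d, 1 ≤ ‖ξ‖ →
          ‖FT μ ξ‖ ≤ C * ‖ξ‖ ^ (-(α * β)) := by
  intro α hα0 hα1
  classical
  obtain ⟨γ, hγprob, hγΓ, C₁, hC₁, hslab⟩ := hΓ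
  have hΓne : Γ.Nonempty := by
    rw [Set.nonempty_iff_ne_empty]
    rintro rfl
    rw [Set.compl_empty] at hγΓ
    exact zero_ne_one (hγΓ.symm.trans hγprob.measure_univ)
  set W : Set (Ed d × (Fin k → Ed d)) := DK.Wgood E with hW
  have hWc : IsCompact W := DK.Wgood_isCompact hEc
  haveI : CompactSpace ↥W := isCompact_iff_compactSpace.mp hWc
  have hWne : W.Nonempty := by
    obtain ⟨s, hs⟩ := hΓne
    obtain ⟨t, x, hx, hxm, hcube⟩ := hE s hs
    exact ⟨(t, x), hx, hcube⟩
  haveI : Nonempty ↥W := hWne.to_subtype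
  have hrange : Γ ⊆ Set.range (DK.qmap (E := E)) := by
    intro s hs
    obtain ⟨t, x, hx, hxm, hcube⟩ := hE s hs
    refine ⟨⟨(t, x), hx, hcube⟩, ?_⟩
    apply Subtype.ext
    show span ℝ (Set.range x) = s.1
    refine Submodule.eq_of_le_of_finrank_eq (Submodule.span_le.mpr ?_) ?_
    · rintro y ⟨i, rfl⟩; exact hxm i
    · rw [DK.span_finrank x hx, s.2]
  have hγrange : γ (Set.range (DK.qmap (E := E)))ᶜ = 0 :=
    measure_mono_null (Set.compl_subset_compl.mpr hrange) hγΓ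
  obtain ⟨g, hgmeas, -, hgae⟩ :=
    exists_measurable_section (DK.qmap (E := E)) DK.qmap_continuous γ hγrange
  set gT : Gr d k → (Ed d × (Fin k → Ed d)) := fun s => (g s : Ed d × (Fin k → Ed d)) with hgT
  have hgTmeas : Measurable gT := measurable_subtype_coe.comp hgmeas
  set P : Measure (Ed d × (Fin k → Ed d)) := Measure.map gT γ with hP
  haveI : IsProbabilityMeasure P := Measure.isProbabilityMeasure_map hgTmeas.aemeasurable
  haveI : IsProbabilityMeasure (DK.nuD k) := DK.nuD_prob
  set μ : Measure (Ed d) := Measure.map DK.Phi (P.prod (DK.nuD k)) with hμdef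
  haveI : IsProbabilityMeasure μ := Measure.isProbabilityMeasure_map DK.Phi_continuous.aemeasurable
  refine ⟨μ, inferInstance, ?_, ?_⟩
  · -- support in E
    rw [hμdef, Measure.map_apply DK.Phi_continuous.measurable
      hEc.isClosed.measurableSet.compl]
    have hsub : DK.Phi ⁻¹' Eᶜ ⊆ (Wᶜ ×ˢ (Set.univ : Set (Fin k → ℝ)))
        ∪ (Set.univ ×ˢ {r : Fin k → ℝ | ¬ ∀ i, r i ∈ Set.Icc (0:ℝ) 1}) := by
      rintro ⟨w, r⟩ hp
      simp only [Set.mem_preimage, Set.mem_compl_iff] at hp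
      by_contra hcon
      simp only [Set.mem_union, Set.mem_prod, Set.mem_univ, and_true, true_and,
        Set.mem_compl_iff, not_or, not_not, Set.mem_setOf_eq] at hcon
      obtain ⟨hwW, hrQ⟩ := hcon
      exact hp (hwW.2 r hrQ)
    refine le_antisymm (le_trans (measure_mono hsub) ?_) (by simp)
    refine le_trans (measure_union_le _ _) ?_
    rw [Measure.prod_prod, Measure.prod_prod]
    have h1 : P Wᶜ = 0 := by
      rw [hP, Measure.map_apply hgTmeas hWc.isClosed.measurableSet.compl]
      have hempty : gT ⁻¹' Wᶜ = ∅ := by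
        ext s
        simp only [Set.mem_preimage, Set.mem_compl_iff, Set.mem_empty_iff_false, iff_false,
          not_not]
        exact (g s).2
      rw [hempty]; exact measure_empty
    rw [h1, DK.nuD_outside]
    simp
  · -- Fourier decay
    set K := Real.sqrt k with hKdef
    have hK1 : 1 ≤ K := by
      rw [show (1:ℝ) = Real.sqrt 1 by simp]
      exact Real.sqrt_le_sqrt (by exact_mod_cast hk)
    have hK0 : 0 < K := lt_of_lt_of_le one_pos hK1
    set N : ℕ := ⌈α * β / (1 - α)⌉₊ with hN
    obtain ⟨CN, hCN, hdecay⟩ := psiC_FT_decay N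
    refine ⟨C₁ + CN * K ^ N, by positivity, fun ξ hξ => ?_⟩
    have hnorm_pos : (0:ℝ) < ‖ξ‖ := lt_of_lt_of_le one_pos hξ
    have hξ0 : ξ ≠ 0 := by
      intro h; rw [h, norm_zero] at hnorm_pos; exact lt_irrefl _ hnorm_pos
    set η : ℝ := ‖ξ‖ ^ (-α) with hη
    have hη_pos : 0 < η := Real.rpow_pos_of_pos hnorm_pos _
    set A : Set (Ed d × (Fin k → Ed d)) :=
      {w | ∑ i, (⟪ξ, w.2 i⟫ : ℝ)^2 < (η * ‖ξ‖)^2} with hA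
    have hAopen : IsOpen A := by
      refine isOpen_lt ?_ continuous_const
      exact continuous_finset_sum _ fun i _ =>
        (continuous_const.inner ((continuous_apply i).comp continuous_snd)).pow 2
    set coff : ℝ := CN * K ^ N / (η * ‖ξ‖) ^ N with hcoff
    have hηξ_pos : 0 < η * ‖ξ‖ := by positivity
    have hcoff_nonneg : 0 ≤ coff := by positivity
    set f : (Ed d × (Fin k → Ed d)) → ℝ := fun w => ∏ i, ‖𝓕 psiC ⟪ξ, w.2 i⟫‖ with hf
    have hf_nonneg : ∀ w, 0 ≤ f w := fun w => Finset.prod_nonneg fun i _ => norm_nonneg _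
    have hfle : ∀ w, f w ≤ A.indicator (fun _ => (1:ℝ)) w + coff := by
      intro w
      by_cases hwA : w ∈ A
      · rw [Set.indicator_of_mem hwA]
        have h1 : f w ≤ 1 :=
          Finset.prod_le_one (fun i _ => norm_nonneg _) (fun i _ => psiC_FT_bound _)
        linarith
      · rw [Set.indicator_of_notMem hwA, zero_add]
        have hm : 0 < η * ‖ξ‖ / K := by positivity
        have hK2 : K ^ 2 = (k : ℝ) := Real.sq_sqrt (Nat.cast_nonneg k)
        have hk0 : (0:ℝ) < k := by exact_mod_cast hk
        have hw2 : (η * ‖ξ‖ / K) ^ 2 * k ≤ ∑ i, (⟪ξ, w.2 i⟫ : ℝ)^2 := by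
          have hge : (η * ‖ξ‖)^2 ≤ ∑ i, (⟪ξ, w.2 i⟫ : ℝ)^2 := not_lt.mp hwA
          calc (η * ‖ξ‖ / K) ^ 2 * k = (η * ‖ξ‖)^2 / K^2 * k := by rw [div_pow]
            _ = (η * ‖ξ‖)^2 := by rw [hK2]; field_simp
            _ ≤ _ := hge
        have hb := DK.offslab_bound hk ξ N CN hCN hdecay psiC_FT_bound hm w hw2
        calc f w ≤ CN / (η * ‖ξ‖ / K) ^ N := hb
          _ = coff := by
            rw [hcoff, div_pow]
            rw [eq_div_iff (by positivity)]
            field_simp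
    have hindint : Integrable (fun w => A.indicator (fun _ => (1:ℝ)) w + coff) P := by
      exact ((integrable_const (1:ℝ)).indicator hAopen.measurableSet).add (integrable_const coff)
    have hint : ∫ w, f w ∂P ≤ (P A).toReal + coff := by
      refine le_trans (integral_mono_of_nonneg (Eventually.of_forall hf_nonneg) hindint
        (Eventually.of_forall hfle)) ?_
      rw [integral_add ((integrable_const (1:ℝ)).indicator hAopen.measurableSet)
        (integrable_const coff)]
      rw [integral_indicator_const _ hAopen.measurableSet, integral_const]
      simp [measure_univ, measureReal_def]
    have hPA : (P A).toReal ≤ C₁ * η ^ β := by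
      have hPA1 : P A ≤ γ (Sslab ξ η) := by
        rw [hP, Measure.map_apply hgTmeas hAopen.measurableSet]
        have hsub2 : gT ⁻¹' A ⊆ Sslab ξ η ∪ {s | ¬ DK.qmap (g s) = s} := by
          intro s hs
          by_cases hgs : DK.qmap (g s) = s
          · left
            have hx := (g s).2.1
            have hs1 : s.1 = span ℝ (Set.range (gT s).2) := by
              conv_lhs => rw [← hgs]
              rfl
            rw [Sslab, Set.mem_setOf_eq]
            have hproj : (s.1.orthogonalProjectionOnto ξ : Ed d)
                = ∑ i, (⟪ξ, (gT s).2 i⟫ : ℝ) • (gT s).2 i := by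
              rw [hs1]
              exact DK.proj_formula _ hx ξ
            rw [hproj]
            have hnormsq := DK.norm_sq_sum_smul _ hx (fun i => (⟪ξ, (gT s).2 i⟫ : ℝ))
            have hsA : ∑ i, (⟪ξ, (gT s).2 i⟫ : ℝ)^2 < (η * ‖ξ‖)^2 := hs
            have hlt : ‖∑ i, (⟪ξ, (gT s).2 i⟫ : ℝ) • (gT s).2 i‖^2 < (η * ‖ξ‖)^2 := by
              rw [hnormsq]; exact hsA
            exact lt_of_pow_lt_pow_left₀ 2 (by positivity) hlt
          · right; exact hgs
        refine le_trans (measure_mono hsub2) ?_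
        refine le_trans (measure_union_le _ _) ?_
        have hbad : γ {s | ¬ DK.qmap (g s) = s} = 0 := MeasureTheory.ae_iff.mp hgae
        rw [hbad, add_zero]
      exact ENNReal.toReal_le_of_le_ofReal (by positivity)
        (le_trans hPA1 (hslab ξ hξ0 η hη_pos))
    have hηβ : η ^ β = ‖ξ‖ ^ (-(α * β)) := by
      rw [hη, ← Real.rpow_mul (norm_nonneg ξ)]
      ring_nf
    have hcoff_le : coff ≤ CN * K ^ N * ‖ξ‖ ^ (-(α * β)) := by
      have hηξ : η * ‖ξ‖ = ‖ξ‖ ^ (1 - α) := by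
        rw [hη]
        nth_rewrite 2 [show ‖ξ‖ = ‖ξ‖ ^ (1:ℝ) from (Real.rpow_one _).symm]
        rw [← Real.rpow_add hnorm_pos]
        ring_nf
      have hpow : (η * ‖ξ‖) ^ N = ‖ξ‖ ^ ((1 - α) * N) := by
        rw [hηξ, ← Real.rpow_natCast (‖ξ‖ ^ (1 - α)) N, ← Real.rpow_mul (norm_nonneg ξ)]
      have hexp : α * β ≤ (1 - α) * N := by
        have h1 : α * β / (1 - α) ≤ (N : ℝ) := Nat.le_ceil _
        rw [div_le_iff₀ (by linarith)] at h1
        linarith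
      calc coff = CN * K ^ N * (‖ξ‖ ^ ((1 - α) * N))⁻¹ := by
            rw [hcoff, hpow, div_eq_mul_inv]
        _ = CN * K ^ N * ‖ξ‖ ^ (-((1 - α) * N)) := by
            rw [← Real.rpow_neg (norm_nonneg ξ)]
        _ ≤ CN * K ^ N * ‖ξ‖ ^ (-(α * β)) := by
            refine mul_le_mul_of_nonneg_left ?_ (by positivity)
            exact Real.rpow_le_rpow_of_exponent_le hξ (by linarith)
    have hstart : ‖FT μ ξ‖ ≤ ∫ w, f w ∂P := by
      rw [hμdef, DK.FT_factor P ξ]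
      refine le_trans (norm_integral_le_integral_norm _) (le_of_eq ?_)
      exact integral_congr_ae (Eventually.of_forall fun w => DK.FT_factor_norm ξ w)
    calc ‖FT μ ξ‖ ≤ ∫ w, f w ∂P := hstart
      _ ≤ (P A).toReal + coff := hint
      _ ≤ C₁ * η ^ β + CN * K ^ N * ‖ξ‖ ^ (-(α * β)) := add_le_add hPA hcoff_le
      _ = (C₁ + CN * K ^ N) * ‖ξ‖ ^ (-(α * β)) := by rw [hηβ]; ring
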